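/- For every integer n ≥ 1 there exists λ₀ > 1 such that for all real λ ≥ λ₀ the following holds: setting ε = 1/(λ^(n + 1/2) + 1), A = [[1, λ], [λ, 1]], and B = I₂ − εA, for all nonnegative integers n₁, n₂ with n₁ + n₂ = n and every 0/1 vector w ∈ ℂ^(2^n), one has ⟨w, (A^{⊗n₁} ⊗ B^{⊗n₂}) w⟩ ≥ 0. -/

import Mathlib

open Matrix BigOperators ComplexOrder Kronecker

/-- The 2×2 matrix `A = [[1, λ], [λ, 1]]`, viewed as a complex matrix. -/
noncomputable def Amat (lam : ℝ) : Matrix (Fin 2) (Fin 2) ℂ :=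
  !![1, (lam : ℂ); (lam : ℂ), 1]

/-- The `m`-fold Kronecker power of a 2×2 complex matrix, with rows and columns
indexed by functions `Fin m → Fin 2` (the 0-fold power is the 1×1 identity). -/
noncomputable def kronPow2 (M : Matrix (Fin 2) (Fin 2) ℂ) (m : ℕ) :
    Matrix (Fin m → Fin 2) (Fin m → Fin 2) ℂ :=
  Matrix.of fun f g => ∏ i, M (f i) (g i)

set_option maxHeartbeats 1000000 in
theorem exists_lambda_blocks_nonneg (n : ℕ) (hn : 1 ≤ n) :
    ∃ lam₀ : ℝ, 1 < lam₀ ∧ ∀ lam : ℝ, lam₀ ≤ lam →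
      ∀ n₁ n₂ : ℕ, n₁ + n₂ = n →
        ∀ w : ((Fin n₁ → Fin 2) × (Fin n₂ → Fin 2)) → ℂ,
          (∀ i, w i = 0 ∨ w i = 1) →
          0 ≤ star w ⬝ᵥ
            ((kronPow2 (Amat lam) n₁) ⊗ₖ
              (kronPow2
                (1 - ((1 / (lam ^ ((n : ℝ) + 1 / 2) + 1) : ℝ) : ℂ) • Amat lam)
                n₂)).mulVec w := by
  refine ⟨2 ^ (4 * n), one_lt_pow₀ (by norm_num) (by omega), ?_⟩
  intro lam hlam n₁ n₂ hsum w hw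
  have hN1 : (1:ℝ) ≤ 2 ^ (4 * n) := one_le_pow₀ (by norm_num)
  have hlam1 : (1:ℝ) ≤ lam := le_trans hN1 hlam
  have hlam0 : (0:ℝ) < lam := lt_of_lt_of_le one_pos hlam1
  set ε : ℝ := 1 / (lam ^ ((n : ℝ) + 1 / 2) + 1) with hεdef
  set Ar : Matrix (Fin 2) (Fin 2) ℝ := !![1, lam; lam, 1] with hArdef
  set Br : Matrix (Fin 2) (Fin 2) ℝ := 1 - ε • Ar with hBrdef
  -- basic facts about sqrt and ε
  have hsq1 : (1:ℝ) ≤ Real.sqrt lam := Real.one_le_sqrt.mpr hlam1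
  have hsq0 : (0:ℝ) < Real.sqrt lam := lt_of_lt_of_le one_pos hsq1
  have hpow1 : (1:ℝ) ≤ lam ^ n := one_le_pow₀ hlam1
  have hrw : lam ^ ((n : ℝ) + 1 / 2) = lam ^ n * Real.sqrt lam := by
    rw [Real.rpow_add hlam0, Real.rpow_natCast, Real.sqrt_eq_rpow]
  have hD : (0:ℝ) < lam ^ n * Real.sqrt lam + 1 := by positivity
  have hε0 : 0 ≤ ε := by rw [hεdef, hrw]; positivity
  have hεhalf : ε ≤ 1 / 2 := by
    rw [hεdef, hrw]
    rw [div_le_div_iff₀ hD (by norm_num)]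
    nlinarith
  have hε1 : ε ≤ 1 := by linarith
  have hεbound : lam ^ n * ε ≤ 1 / Real.sqrt lam := by
    rw [le_div_iff₀ hsq0, hεdef, hrw]
    have h : lam ^ n * (1 / (lam ^ n * Real.sqrt lam + 1)) * Real.sqrt lam
        = (lam ^ n * Real.sqrt lam) / (lam ^ n * Real.sqrt lam + 1) := by ring
    rw [h, div_le_one hD]; linarith
  -- entrywise facts
  have hAr_mem : ∀ a b : Fin 2, Ar a b = 1 ∨ Ar a b = lam := by
    intro a b; fin_cases a <;> fin_cases b <;> simp [hArdef]
  have hAr_nonneg : ∀ a b : Fin 2, 0 ≤ Ar a b := by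
    intro a b; rcases hAr_mem a b with h | h <;> rw [h] <;> linarith
  have hAr_abs : ∀ a b : Fin 2, |Ar a b| ≤ lam := by
    intro a b; rcases hAr_mem a b with h | h <;> rw [h, abs_of_nonneg (by linarith)] <;> linarith
  have hBr_diag : ∀ a : Fin 2, Br a a = 1 - ε := by
    intro a; fin_cases a <;> simp [hBrdef, hArdef]
  have hBr_abs : ∀ a b : Fin 2, |Br a b| ≤ lam * (if a = b then 1 else ε) := by
    intro a b
    fin_cases a <;> fin_cases b <;>
      simp [hBrdef, hArdef, abs_of_nonneg hε0, abs_of_nonneg hlam0.le, mul_comm] <;> rw [abs_le] <;> constructor <;> nlinarith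
  -- cast lemmas
  have hAcast : ∀ a b : Fin 2, Amat lam a b = ((Ar a b : ℝ) : ℂ) := by
    intro a b; fin_cases a <;> fin_cases b <;> simp [Amat, hArdef]
  have hBcast : ∀ a b : Fin 2,
      (1 - ((ε : ℝ) : ℂ) • Amat lam) a b = ((Br a b : ℝ) : ℂ) := by
    intro a b
    have h1 : (1 - ((ε : ℝ) : ℂ) • Amat lam) a b
        = (1 : Matrix (Fin 2) (Fin 2) ℂ) a b - (ε : ℂ) * Amat lam a b := by
      simp [Matrix.sub_apply]
    have h2 : Br a b = (1 : Matrix (Fin 2) (Fin 2) ℝ) a b - ε * Ar a b := by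
      simp [hBrdef, Matrix.sub_apply]
    rw [h1, h2, hAcast a b]
    by_cases h : a = b <;> simp [Matrix.one_apply, h] <;> push_cast <;> ring
  set P : ((Fin n₁ → Fin 2) × (Fin n₂ → Fin 2)) → ((Fin n₁ → Fin 2) × (Fin n₂ → Fin 2)) → ℝ :=
    fun p q => (∏ i, Ar (p.1 i) (q.1 i)) * ∏ i, Br (p.2 i) (q.2 i) with hPdef
  have hM : ∀ p q : (Fin n₁ → Fin 2) × (Fin n₂ → Fin 2),
      ((kronPow2 (Amat lam) n₁) ⊗ₖ
        (kronPow2 (1 - ((ε : ℝ) : ℂ) • Amat lam) n₂)) p q = ((P p q : ℝ) : ℂ) := by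
    rintro ⟨f, g⟩ ⟨f', g'⟩
    have : ((kronPow2 (Amat lam) n₁) ⊗ₖ
        (kronPow2 (1 - ((ε : ℝ) : ℂ) • Amat lam) n₂)) (f, g) (f', g')
        = (∏ i, Amat lam (f i) (f' i)) * ∏ i, (1 - ((ε : ℝ) : ℂ) • Amat lam) (g i) (g' i) := by
      simp [Matrix.kroneckerMap_apply, kronPow2]
    rw [this, hPdef]
    simp only [hAcast, hBcast]
    push_cast
    rfl
  -- the 0/1 weight function
  set t : ((Fin n₁ → Fin 2) × (Fin n₂ → Fin 2)) → ℝ :=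
    fun p => if w p = 1 then 1 else 0 with htdef
  have hwt : ∀ p, w p = ((t p : ℝ) : ℂ) := by
    intro p; rcases hw p with h | h <;> simp [htdef, h]
  have ht0 : ∀ p, 0 ≤ t p := by intro p; rw [htdef]; dsimp; split_ifs <;> norm_num
  have ht1 : ∀ p, t p ≤ 1 := by intro p; rw [htdef]; dsimp; split_ifs <;> norm_num
  have htsq : ∀ p, t p * t p = t p := by intro p; rw [htdef]; dsimp; split_ifs <;> norm_num
  -- rewrite the quadratic form as a real sum
  have key : star w ⬝ᵥ
      ((kronPow2 (Amat lam) n₁) ⊗ₖ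
        (kronPow2 (1 - ((ε : ℝ) : ℂ) • Amat lam) n₂)).mulVec w
      = ((∑ p, ∑ q, t p * (P p q * t q) : ℝ) : ℂ) := by
    rw [dotProduct, Complex.ofReal_sum]
    apply Finset.sum_congr rfl
    intro p _
    rw [Matrix.mulVec, dotProduct, Pi.star_apply, hwt p, Complex.ofReal_sum,
      Finset.mul_sum]
    apply Finset.sum_congr rfl
    intro q _
    rw [hM p q, hwt q]
    have hst : star ((t p : ℝ) : ℂ) = ((t p : ℝ) : ℂ) := by
      rw [Complex.star_def, Complex.conj_ofReal]
    rw [hst]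
    push_cast
    ring
  rw [key, Complex.zero_le_real]
  -- bounds on the entries P
  have hPdiag : ∀ p, ((1:ℝ)/2) ^ n ≤ P p p := by
    intro p
    have h1 : (∏ i, Ar (p.1 i) (p.1 i)) = 1 := by
      have : ∀ a : Fin 2, Ar a a = 1 := by intro a; fin_cases a <;> simp [hArdef]
      simp [this]
    have h2 : (∏ i, Br (p.2 i) (p.2 i)) = (1 - ε) ^ n₂ := by
      simp [hBr_diag]
    rw [hPdef]; dsimp only
    rw [h1, h2, one_mul]
    calc ((1:ℝ)/2) ^ n ≤ ((1:ℝ)/2) ^ n₂ :=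
          pow_le_pow_of_le_one (by norm_num) (by norm_num) (by omega)
      _ ≤ (1 - ε) ^ n₂ := pow_le_pow_left₀ (by norm_num) (by linarith) n₂
  have hPlow : ∀ p q, -(1 / Real.sqrt lam) ≤ P p q := by
    intro p q
    by_cases hg : p.2 = q.2
    · have h2 : 0 ≤ ∏ i, Br (p.2 i) (q.2 i) := by
        rw [hg]
        apply Finset.prod_nonneg
        intro i _
        rw [hBr_diag]; linarith
      have h1 : 0 ≤ ∏ i, Ar (p.1 i) (q.1 i) :=
        Finset.prod_nonneg fun i _ => hAr_nonneg _ _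
      have : 0 ≤ P p q := mul_nonneg h1 h2
      have hpos : 0 ≤ 1 / Real.sqrt lam := by positivity
      linarith
    · obtain ⟨i₀, hi₀⟩ : ∃ i, p.2 i ≠ q.2 i := by
        by_contra h; push_neg at h; exact hg (funext h)
      have hA_le : |∏ i, Ar (p.1 i) (q.1 i)| ≤ lam ^ n₁ := by
        rw [Finset.abs_prod]
        calc (∏ i, |Ar (p.1 i) (q.1 i)|) ≤ ∏ _i : Fin n₁, lam :=
              Finset.prod_le_prod (fun i _ => abs_nonneg _) (fun i _ => hAr_abs _ _)
          _ = lam ^ n₁ := by simp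
      have hc0 : ∀ i : Fin n₂, 0 ≤ (if p.2 i = q.2 i then (1:ℝ) else ε) := by
        intro i; split_ifs <;> linarith
      have hc1 : ∀ i : Fin n₂, (if p.2 i = q.2 i then (1:ℝ) else ε) ≤ 1 := by
        intro i; split_ifs <;> linarith
      have hprodc : (∏ i, (if p.2 i = q.2 i then (1:ℝ) else ε)) ≤ ε := by
        rw [← Finset.mul_prod_erase Finset.univ _ (Finset.mem_univ i₀), if_neg hi₀]
        calc ε * (∏ i ∈ Finset.univ.erase i₀, (if p.2 i = q.2 i then (1:ℝ) else ε))
            ≤ ε * 1 := by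
              apply mul_le_mul_of_nonneg_left _ hε0
              exact Finset.prod_le_one (fun i _ => hc0 i) (fun i _ => hc1 i)
          _ = ε := mul_one ε
      have hB_le : |∏ i, Br (p.2 i) (q.2 i)| ≤ lam ^ n₂ * ε := by
        rw [Finset.abs_prod]
        calc (∏ i, |Br (p.2 i) (q.2 i)|)
            ≤ ∏ i, lam * (if p.2 i = q.2 i then (1:ℝ) else ε) :=
              Finset.prod_le_prod (fun i _ => abs_nonneg _) (fun i _ => hBr_abs _ _)
          _ = lam ^ n₂ * ∏ i, (if p.2 i = q.2 i then (1:ℝ) else ε) := by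
              rw [Finset.prod_mul_distrib]; simp
          _ ≤ lam ^ n₂ * ε := by
              apply mul_le_mul_of_nonneg_left hprodc (by positivity)
      have habs : |P p q| ≤ lam ^ n * ε := by
        rw [hPdef]; dsimp only
        rw [abs_mul]
        calc |∏ i, Ar (p.1 i) (q.1 i)| * |∏ i, Br (p.2 i) (q.2 i)|
            ≤ lam ^ n₁ * (lam ^ n₂ * ε) :=
              mul_le_mul hA_le hB_le (abs_nonneg _) (by positivity)
          _ = lam ^ (n₁ + n₂) * ε := by rw [pow_add]; ring
          _ = lam ^ n * ε := by rw [hsum]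
      have h1 := (abs_le.mp habs).1
      linarith [hεbound]
  -- the final sum inequality
  set S : ℝ := ∑ p, t p with hSdef
  have hS0 : 0 ≤ S := Finset.sum_nonneg fun p _ => ht0 p
  have hScard : S ≤ 2 ^ n := by
    calc S ≤ ∑ _p : ((Fin n₁ → Fin 2) × (Fin n₂ → Fin 2)), (1:ℝ) :=
          Finset.sum_le_sum fun p _ => ht1 p
      _ = (Fintype.card ((Fin n₁ → Fin 2) × (Fin n₂ → Fin 2)) : ℝ) := by simp
      _ = 2 ^ n := by simp [pow_add, ← hsum]
  have hB2 : (1 / Real.sqrt lam) * 2 ^ n ≤ ((1:ℝ)/2) ^ n := by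
    have hsqlam : (2:ℝ) ^ (2*n) ≤ Real.sqrt lam := by
      have h1 : ((2:ℝ) ^ (2*n)) ^ 2 = 2 ^ (4*n) := by rw [← pow_mul]; ring_nf
      have h2 : Real.sqrt (2 ^ (4*n)) = (2:ℝ) ^ (2*n) := by
        rw [← h1, Real.sqrt_sq (by positivity)]
      calc (2:ℝ) ^ (2*n) = Real.sqrt (2 ^ (4*n)) := h2.symm
        _ ≤ Real.sqrt lam := Real.sqrt_le_sqrt hlam
    have h3 : 1 / Real.sqrt lam ≤ 1 / (2:ℝ) ^ (2*n) :=
      one_div_le_one_div_of_le (by positivity) hsqlam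
    have h4 : (1 / (2:ℝ) ^ (2*n)) * 2 ^ n = ((1:ℝ)/2) ^ n := by
      rw [two_mul, pow_add, _root_.one_div_pow]
      field_simp
    calc (1 / Real.sqrt lam) * 2 ^ n ≤ (1 / (2:ℝ) ^ (2*n)) * 2 ^ n := by
          apply mul_le_mul_of_nonneg_right h3 (by positivity)
      _ = ((1:ℝ)/2) ^ n := h4
  have hmain : (∑ p, ∑ q, (-(1/Real.sqrt lam) * (t p * t q) +
        if p = q then (((1:ℝ)/2) ^ n + 1/Real.sqrt lam) * t p else 0))
      ≤ ∑ p, ∑ q, t p * (P p q * t q) := by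
    apply Finset.sum_le_sum; intro p _
    apply Finset.sum_le_sum; intro q _
    by_cases hpq : p = q
    · subst hpq
      rw [if_pos rfl]
      have h1 := hPdiag p
      have h2 := htsq p
      have h3 := mul_le_mul_of_nonneg_right h1 (ht0 p)
      have h4 : t p * (P p p * t p) = P p p * t p := by
        rw [show t p * (P p p * t p) = P p p * (t p * t p) from by ring, h2]
      rw [h2, h4]
      linarith
    · simp only [if_neg hpq, add_zero]
      have h1 := hPlow p q
      have h3 := mul_le_mul_of_nonneg_left (mul_le_mul_of_nonneg_right h1 (ht0 q)) (ht0 p)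
      nlinarith [ht0 p, ht0 q, ht1 p, ht1 q]
  have hvalue : (∑ p, ∑ q, (-(1/Real.sqrt lam) * (t p * t q) +
        if p = q then (((1:ℝ)/2) ^ n + 1/Real.sqrt lam) * t p else 0))
      = -(1/Real.sqrt lam) * (S * S) + (((1:ℝ)/2) ^ n + 1/Real.sqrt lam) * S := by
    rw [hSdef]
    simp only [Finset.sum_add_distrib]
    congr 1
    · calc (∑ p, ∑ q, -(1/Real.sqrt lam) * (t p * t q))
          = ∑ p, -(1/Real.sqrt lam) * (t p * ∑ q, t q) := by
            refine Finset.sum_congr rfl fun p _ => ?_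
            rw [← Finset.mul_sum, ← Finset.mul_sum]
        _ = -(1/Real.sqrt lam) * ((∑ p, t p) * ∑ q, t q) := by
            rw [← Finset.mul_sum, ← Finset.sum_mul]
    · rw [Finset.mul_sum]
      refine Finset.sum_congr rfl fun p _ => ?_
      simp
  rw [hvalue] at hmain
  have hBpos : 0 ≤ 1 / Real.sqrt lam := by positivity
  nlinarith [mul_nonneg (mul_nonneg hBpos hS0) (sub_nonneg.mpr hScard),
    mul_le_mul_of_nonneg_right hB2 hS0]
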